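/- Let κ be a regular uncountable cardinal. Then there exists a family {S_i : i < 2^(κ⁺)} of stationary subsets of κ⁺ ∩ cof(κ) such that for all distinct i, j < 2^(κ⁺), the set S_i \ S_j is stationary in κ⁺. -/

import Mathlib

universe u

open Cardinal Set

namespace FarTrees

/-- `QSet κ`: the set of functions `f : κ → 2` whose support is non-empty
and has size less than `κ` (the underlying set of the linear order `Q_κ`). -/
def QSet (κ : Cardinal.{u}) : Set (κ.ord.ToType → Bool) :=
  {f | (∃ i, f i = true) ∧ #{i | f i = true} < κ}

/-- The lexicographic strict order on functions `κ → 2` (with `false < true`). -/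
def qlt {κ : Cardinal.{u}} (f g : κ.ord.ToType → Bool) : Prop :=
  ∃ i, (∀ j, j < i → f j = g j) ∧ f i < g i

/-- The corresponding non-strict order. -/
def qle {κ : Cardinal.{u}} (f g : κ.ord.ToType → Bool) : Prop :=
  qlt f g ∨ f = g

/-- `(R, e)` is a Dedekind completion of `Q_κ`: `R` is a (conditionally) complete
dense linear order without endpoints, and `e` is an order embedding of `Q_κ`
into `R` with dense image. -/
def IsDedekindCompletion (κ : Cardinal.{u}) (R : Type u) [LinearOrder R]
    (e : QSet κ → R) : Prop :=
  (∀ p q : QSet κ, qlt p.1 q.1 ↔ e p < e q) ∧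
  (∀ a b : R, a < b → ∃ q : QSet κ, a < e q ∧ e q < b) ∧
  (∀ a : R, ∃ b, b < a) ∧ (∀ a : R, ∃ b, a < b) ∧
  (∀ s : Set R, s.Nonempty → BddAbove s → ∃ a, IsLUB s a)

/-- `A` is unbounded (cofinal) in the ordinal `δ`. -/
def UnbIn (δ : Ordinal.{u}) (A : Set Ordinal.{u}) : Prop :=
  ∀ γ < δ, ∃ β ∈ A, γ ≤ β ∧ β < δ

/-- `β` is a limit point (accumulation point) of the set of ordinals `A`. -/
def IsAccOf (β : Ordinal.{u}) (A : Set Ordinal.{u}) : Prop :=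
  0 < β ∧ ∀ γ < β, ∃ c ∈ A, γ < c ∧ c < β

/-- `C` is a club (closed and unbounded) subset of the ordinal `δ`. -/
def IsClubIn (δ : Ordinal.{u}) (C : Set Ordinal.{u}) : Prop :=
  C ⊆ Iio δ ∧ UnbIn δ C ∧ ∀ β < δ, IsAccOf β C → β ∈ C

/-- `S` is a stationary subset of the ordinal `δ`: it meets every club in `δ`. -/
def IsStationaryIn (δ : Ordinal.{u}) (S : Set Ordinal.{u}) : Prop :=
  ∀ C, IsClubIn δ C → (S ∩ C).Nonempty

/-- The set of ordinals `A` has order type at most `δ`, i.e. it order-embeds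
into `δ` (for well-orders this is equivalent to `type A ≤ δ`). -/
def OtypeLE (A : Set Ordinal.{u}) (δ : Ordinal.{u}) : Prop :=
  ∃ f : A → Ordinal.{u}, (∀ a, f a < δ) ∧ ∀ a b : A, a.1 < b.1 → f a < f b

/-- `κ⁺ ∩ cof(κ)`: the ordinals below `κ⁺` of cofinality `κ`. -/
def cofSet (κ : Cardinal.{u}) : Set Ordinal.{u} :=
  {α | α < (Order.succ κ).ord ∧ α.cof = κ}

/-- The Brodsky–Rinot proxy principle `⊠*_κ(𝒮)`: there is a sequence
`⟨C_δ : δ < κ⁺⟩`, each `C_δ` a club in `δ` of order type at most `κ`, such that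
for every unbounded `X ⊆ κ⁺` and every `S ∈ 𝒮` there are stationarily many
`δ ∈ S` with `(C_δ ∩ X) \ lim(C_δ)` cofinal in `δ`. -/
def Boxtimes (κ : Cardinal.{u}) (𝒮 : Set (Set Ordinal.{u})) : Prop :=
  ∃ Cs : Ordinal.{u} → Set Ordinal.{u},
    (∀ δ < (Order.succ κ).ord, IsClubIn δ (Cs δ) ∧ OtypeLE (Cs δ) κ.ord) ∧
    ∀ X : Set Ordinal.{u}, X ⊆ Iio (Order.succ κ).ord →
      UnbIn (Order.succ κ).ord X → ∀ S ∈ 𝒮,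
      IsStationaryIn (Order.succ κ).ord
        {δ ∈ S | UnbIn δ ((Cs δ ∩ X) \ {β | IsAccOf β (Cs δ)})}

/-- A tree: a strict partial order in which the set of predecessors of every
element is well-ordered. -/
structure Tree' (α : Type u) where
  lt : α → α → Prop
  trans : ∀ {x y z}, lt x y → lt y z → lt x z
  irrefl : ∀ x, ¬ lt x x
  wo : ∀ x : α, IsWellOrder {y // lt y x} (fun a b => lt a.1 b.1)

namespace Tree'

variable {α β : Type u}

/-- The height of a node: the order type of its set of predecessors. -/
noncomputable def ht (T : Tree' α) (x : α) : Ordinal.{u} :=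
  @Ordinal.type {y // T.lt y x} (fun a b => T.lt a.1 b.1) (T.wo x)

/-- Level `δ` of the tree. -/
def level (T : Tree' α) (δ : Ordinal.{u}) : Set α := {x | T.ht x = δ}

/-- `T` is a `λ`-tree: it has height `λ` and all levels of size `< λ`. -/
def IsKTree (T : Tree' α) (lam : Cardinal.{u}) : Prop :=
  (∀ x, T.ht x < lam.ord) ∧ (∀ δ < lam.ord, (T.level δ).Nonempty) ∧
  ∀ δ < lam.ord, #(T.level δ) < lam

/-- A chain: a linearly ordered subset. -/
def IsChain (T : Tree' α) (c : Set α) : Prop :=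
  ∀ x ∈ c, ∀ y ∈ c, x ≠ y → T.lt x y ∨ T.lt y x

/-- An antichain: a set of pairwise incomparable elements. -/
def IsAntichain (T : Tree' α) (A : Set α) : Prop :=
  ∀ x ∈ A, ∀ y ∈ A, x ≠ y → ¬ T.lt x y ∧ ¬ T.lt y x

/-- A branch: a maximal chain. -/
def IsBranch (T : Tree' α) (b : Set α) : Prop :=
  T.IsChain b ∧ ∀ c, T.IsChain c → b ⊆ c → b = c

/-- A cofinal branch of a `λ`-tree: a branch meeting every level below `λ`. -/
def IsCofinalBranch (T : Tree' α) (lam : Cardinal.{u}) (b : Set α) : Prop :=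
  T.IsBranch b ∧ ∀ δ < lam.ord, ∃ x ∈ b, T.ht x = δ

/-- A `λ`-Aronszajn tree: a `λ`-tree with no cofinal branch. -/
def IsAronszajn (T : Tree' α) (lam : Cardinal.{u}) : Prop :=
  T.IsKTree lam ∧ ¬ ∃ b, T.IsCofinalBranch lam b

/-- A Suslin `λ`-tree: a `λ`-tree with no chains or antichains of size `λ`. -/
def IsSuslin (T : Tree' α) (lam : Cardinal.{u}) : Prop :=
  T.IsKTree lam ∧ (∀ c, T.IsChain c → #c < lam) ∧
    ∀ A, T.IsAntichain A → #A < lam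

/-- Normality of a `λ`-tree. -/
def IsNormal (T : Tree' α) (lam : Cardinal.{u}) : Prop :=
  (∀ x, ∀ γ, T.ht x < γ → γ < lam.ord → ∃ y, T.lt x y ∧ T.ht y = γ) ∧
  (∀ x y, x ≠ y → T.ht x = T.ht y → Order.IsSuccLimit (T.ht x) →
    {z | T.lt z x} ≠ {z | T.lt z y}) ∧
  (∀ x, ∃ y z, T.lt x y ∧ T.lt x z ∧ y ≠ z ∧ ¬ T.lt y z ∧ ¬ T.lt z y)

/-- `κ`-completeness: every chain of order type `< κ` has an upper bound. -/
def IsComplete (T : Tree' α) (κ : Cardinal.{u}) : Prop :=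
  ∀ δ : Ordinal.{u}, δ < κ.ord → ∀ s : δ.ToType → α,
    (∀ i j, i < j → T.lt (s i) (s j)) →
    ∃ u, ∀ i, T.lt (s i) u ∨ s i = u

/-- `T` is `L`-embeddable: some map into `L` is strictly increasing on `<_T`. -/
def LEmbeddable (T : Tree' α) (L : Type u) [LT L] : Prop :=
  ∃ f : α → L, ∀ x y, T.lt x y → f x < f y

/-- `T` is special (for a tree of height `μ⁺`): there is a map into `μ`
injective on chains. -/
def IsSpecial (T : Tree' α) (μ : Cardinal.{u}) : Prop :=
  ∃ g : α → μ.ord.ToType, ∀ x y, T.lt x y → g x ≠ g y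

/-- The restriction `T↾S` is special: there is a map from the nodes of height
in `S` into `μ` which is injective on chains. -/
def IsSpecialOn (T : Tree' α) (S : Set Ordinal.{u}) (μ : Cardinal.{u}) : Prop :=
  ∃ g : {x : α // T.ht x ∈ S} → μ.ord.ToType,
    ∀ x y : {x : α // T.ht x ∈ S}, T.lt x.1 y.1 → g x ≠ g y

/-- A downward closed subset of a tree. -/
def DownwardClosed (T : Tree' α) (D : Set α) : Prop :=
  ∀ x ∈ D, ∀ y, T.lt y x → y ∈ D

end Tree'

/-- A club isomorphism of `T` and `U` on the club `C`: an order isomorphism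
between `T↾C` and `U↾C`. -/
def ClubIsoOn {α β : Type u} (T : Tree' α) (U : Tree' β)
    (C : Set Ordinal.{u}) : Prop :=
  ∃ f : {x : α // T.ht x ∈ C} → {y : β // U.ht y ∈ C},
    Function.Bijective f ∧ ∀ x y, T.lt x.1 y.1 ↔ U.lt (f x).1 (f y).1

/-- `T` and `U` are club isomorphic `λ`-trees. -/
def ClubIsomorphic {α β : Type u} (T : Tree' α) (U : Tree' β)
    (lam : Cardinal.{u}) : Prop :=
  ∃ C, IsClubIn lam.ord C ∧ ClubIsoOn T U C

/-- `T` and `U` are near: they have downward closed subtrees which are club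
isomorphic.  (For downward closed subtrees, heights in the subtree agree with
heights in the ambient tree.) -/
def Near {α β : Type u} (T : Tree' α) (U : Tree' β) (lam : Cardinal.{u}) : Prop :=
  ∃ D₁ : Set α, ∃ D₂ : Set β, T.DownwardClosed D₁ ∧ U.DownwardClosed D₂ ∧
    ∃ C, IsClubIn lam.ord C ∧
      ∃ f : {x : α // x ∈ D₁ ∧ T.ht x ∈ C} → {y : β // y ∈ D₂ ∧ U.ht y ∈ C},
        Function.Bijective f ∧ ∀ x y, T.lt x.1 y.1 ↔ U.lt (f x).1 (f y).1

/-- `T` and `U` are far: they are not near. -/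
def Far {α β : Type u} (T : Tree' α) (U : Tree' β) (lam : Cardinal.{u}) : Prop :=
  ¬ Near T U lam


section StationaryHelpers

open Ordinal Set

variable {κ : Cardinal.{u}}

private lemma stat_of_subset {δ : Ordinal.{u}} {S S' : Set Ordinal.{u}} (h : S ⊆ S')
    (hS : IsStationaryIn δ S) : IsStationaryIn δ S' := fun C hC =>
  (hS C hC).imp fun x hx => ⟨h hx.1, hx.2⟩

private lemma succ_regular (hreg : κ.IsRegular) : (Order.succ κ).IsRegular :=
  Cardinal.isRegular_succ hreg.aleph0_le

private lemma sup_lt_L (hreg : κ.IsRegular) {ι : Type u} (hι : #ι ≤ κ)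
    {f : ι → Ordinal.{u}} (hf : ∀ i, f i < (Order.succ κ).ord) :
    iSup f < (Order.succ κ).ord :=
  Ordinal.iSup_lt_of_lt_cof (by rw [(succ_regular hreg).cof_eq]; exact hι.trans_lt (Order.lt_succ κ)) hf

private lemma club_iInter (hreg : κ.IsRegular) (hunc : ℵ₀ < κ)
    {ι : Type u} [Nonempty ι] (hι : #ι ≤ κ) {C : ι → Set Ordinal.{u}}
    (hC : ∀ i, IsClubIn (Order.succ κ).ord (C i)) :
    IsClubIn (Order.succ κ).ord (⋂ i, C i) := by
  set L := (Order.succ κ).ord with hLdef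
  have hLlim : Order.IsSuccLimit L := Cardinal.isSuccLimit_ord (hreg.aleph0_le.trans (Order.le_succ κ))
  have hnxt : ∀ (i : ι) (x : Ordinal.{u}), ∃ c, x < L → c ∈ C i ∧ x < c ∧ c < L := by
    intro i x
    by_cases hx : x < L
    · obtain ⟨c, hcC, hxc, hcL⟩ := (hC i).2.1 (Order.succ x) (hLlim.succ_lt hx)
      exact ⟨c, fun _ => ⟨hcC, (Order.lt_succ x).trans_le hxc, hcL⟩⟩
    · exact ⟨0, fun h => absurd h hx⟩
  choose nxt hnxt using hnxt
  refine ⟨fun x hx => (hC (Classical.arbitrary ι)).1 (Set.mem_iInter.mp hx _), ?_, ?_⟩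
  · intro γ hγ
    set g : ℕ → Ordinal.{u} :=
      fun n => Nat.rec γ (fun _ x => iSup fun i => nxt i x) n with hg
    have hgL : ∀ n, g n < L := by
      intro n; induction n with
      | zero => exact hγ
      | succ n ih => exact sup_lt_L hreg hι fun i => (hnxt i (g n) ih).2.2
    have hglt : ∀ n, g n < g (n + 1) := by
      intro n
      have h1 := hnxt (Classical.arbitrary ι) (g n) (hgL n)
      exact h1.2.1.trans_le (Ordinal.le_iSup _ _)
    set g' : ULift.{u} ℕ → Ordinal.{u} := fun n => g n.down with hg'
    have hβL : iSup g' < L :=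
      sup_lt_L (ι := ULift.{u} ℕ) hreg (by simpa using hunc.le) fun n => hgL n.down
    have hgβ : ∀ n, g n < iSup g' := fun n =>
      (hglt n).trans_le (Ordinal.le_iSup g' ⟨n + 1⟩)
    have hacc : ∀ i, IsAccOf (iSup g') (C i) := by
      intro i
      refine ⟨(zero_le (a := g 0)).trans_lt (hgβ 0), ?_⟩
      intro δ hδ
      obtain ⟨⟨n⟩, hn⟩ := Ordinal.lt_iSup_iff.mp hδ
      have h1 := hnxt i (g n) (hgL n)
      refine ⟨nxt i (g n), h1.1, hn.trans h1.2.1, ?_⟩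
      exact (Ordinal.le_iSup (fun j => nxt j (g n)) i).trans_lt (hgβ (n + 1))
    exact ⟨iSup g', Set.mem_iInter.mpr fun i => (hC i).2.2 _ hβL (hacc i),
      (hgβ 0).le, hβL⟩
  · intro β hβ hacc
    refine Set.mem_iInter.mpr fun i => (hC i).2.2 β hβ ?_
    exact ⟨hacc.1, fun γ hγ => (hacc.2 γ hγ).imp fun c hc =>
      ⟨Set.mem_iInter.mp hc.1 i, hc.2⟩⟩

private lemma cof_bsup_eq (hreg : κ.IsRegular) {g : Ordinal.{u} → Ordinal.{u}}
    (hmono : ∀ {x y : Ordinal.{u}}, x < y → y < κ.ord → g x < g y) :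
    (Ordinal.bsup.{u, u} κ.ord fun γ _ => g γ).cof = κ := by
  have hklim : Order.IsSuccLimit κ.ord := Cardinal.isSuccLimit_ord hreg.aleph0_le
  set β := Ordinal.bsup.{u, u} κ.ord fun γ _ => g γ with hβ
  have hlt : ∀ γ, γ < κ.ord → g γ < β := fun γ h =>
    (hmono (Order.lt_succ γ) (hklim.succ_lt h)).trans_le
      (Ordinal.le_bsup _ _ (hklim.succ_lt h))
  refine le_antisymm (le_trans (Ordinal.cof_bsup_le hlt) (by simp)) ?_
  refine Ordinal.le_cof_iff_lsub.mpr ?_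
  intro ι f hf
  by_contra hcon
  push_neg at hcon
  have hfi : ∀ i, ∃ γ, ∃ _ : γ < κ.ord, f i < g γ := by
    intro i
    have hfb : f i < β := hf ▸ Ordinal.lt_lsub f i
    exact (Ordinal.lt_bsup _).mp hfb
  choose γf hγf hfg using hfi
  have hsup : iSup γf < κ.ord :=
    Ordinal.iSup_lt_of_lt_cof (by rw [hreg.cof_eq]; exact hcon) hγf
  have hall : ∀ i, f i < g (iSup γf) := by
    intro i
    rcases eq_or_lt_of_le (Ordinal.le_iSup γf i) with h | h
    · exact h ▸ hfg i
    · exact (hfg i).trans (hmono h hsup)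
  have h1 : β ≤ g (iSup γf) := hf ▸ Ordinal.lsub_le hall
  exact absurd (h1.trans_lt (hlt _ hsup)) (lt_irrefl β)

private lemma cofSet_stationary (hreg : κ.IsRegular) (hunc : ℵ₀ < κ) :
    IsStationaryIn (Order.succ κ).ord (cofSet κ) := by
  intro C hC
  set L := (Order.succ κ).ord with hLdef
  have hLlim : Order.IsSuccLimit L := Cardinal.isSuccLimit_ord (hreg.aleph0_le.trans (Order.le_succ κ))
  have hklim : Order.IsSuccLimit κ.ord := Cardinal.isSuccLimit_ord hreg.aleph0_le
  have hstep : ∀ x : Ordinal.{u}, ∃ c, x < L → c ∈ C ∧ x < c ∧ c < L := by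
    intro x
    by_cases hx : x < L
    · obtain ⟨c, hcC, hxc, hcL⟩ := hC.2.1 (Order.succ x) (hLlim.succ_lt hx)
      exact ⟨c, fun _ => ⟨hcC, (Order.lt_succ x).trans_le hxc, hcL⟩⟩
    · exact ⟨0, fun h => absurd h hx⟩
  choose nxt hnxt using hstep
  set g : Ordinal.{u} → Ordinal.{u} :=
    Ordinal.lt_wf.fix (fun α IH => nxt (Ordinal.bsup.{u, u} α IH)) with hgdef
  have hgeq : ∀ α, g α = nxt (Ordinal.bsup.{u, u} α fun γ _ => g γ) := fun α =>
    Ordinal.lt_wf.fix_eq _ α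
  have key : ∀ α, α < κ.ord → (g α ∈ C ∧ g α < L ∧ ∀ γ, γ < α → g γ < g α) := by
    intro α
    induction α using Ordinal.induction with
    | _ α IH =>
      intro hα
      have hbs : Ordinal.bsup.{u, u} α (fun γ _ => g γ) < L := by
        refine Ordinal.bsup_lt_ord ?_ fun γ hγ => (IH γ hγ (hγ.trans hα)).2.1
        rw [(succ_regular hreg).cof_eq]
        exact Cardinal.lt_ord.mp (hα.trans (Cardinal.ord_lt_ord.mpr (Order.lt_succ κ)))
      have h1 := hnxt _ hbs
      refine ⟨by rw [hgeq α]; exact h1.1, by rw [hgeq α]; exact h1.2.2, ?_⟩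
      intro γ hγ
      have hle : g γ ≤ Ordinal.bsup.{u, u} α fun γ _ => g γ := Ordinal.le_bsup _ γ hγ
      rw [hgeq α]
      exact hle.trans_lt h1.2.1
  set β := Ordinal.bsup.{u, u} κ.ord fun γ _ => g γ with hβ
  have hβL : β < L := by
    refine Ordinal.bsup_lt_ord ?_ fun γ hγ => (key γ hγ).2.1
    rw [(succ_regular hreg).cof_eq, Cardinal.card_ord]
    exact Order.lt_succ κ
  have hmono : ∀ {x y : Ordinal.{u}}, x < y → y < κ.ord → g x < g y := fun hx hy =>
    (key _ hy).2.2 _ hx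
  have hcof : β.cof = κ := cof_bsup_eq hreg hmono
  have hglt : ∀ γ, γ < κ.ord → g γ < β := fun γ h =>
    (hmono (Order.lt_succ γ) (hklim.succ_lt h)).trans_le
      (Ordinal.le_bsup _ _ (hklim.succ_lt h))
  have hβC : β ∈ C := by
    refine hC.2.2 β hβL ⟨(zero_le (a := g 0)).trans_lt (hglt 0 hklim.pos), ?_⟩
    intro γ hγ
    obtain ⟨δ, hδ, hgδ⟩ := (Ordinal.lt_bsup _).mp hγ
    exact ⟨g δ, (key δ hδ).1, hgδ, hglt δ hδ⟩
  exact ⟨β, ⟨hβL, hcof⟩, hβC⟩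

private lemma Ioo_club (hreg : κ.IsRegular) {β : Ordinal.{u}} (hβ : β < (Order.succ κ).ord) :
    IsClubIn (Order.succ κ).ord (Set.Ioo β (Order.succ κ).ord) := by
  set L := (Order.succ κ).ord with hLdef
  have hLlim : Order.IsSuccLimit L := Cardinal.isSuccLimit_ord (hreg.aleph0_le.trans (Order.le_succ κ))
  refine ⟨fun x hx => hx.2, ?_, ?_⟩
  · intro γ hγ
    refine ⟨max γ (Order.succ β), ⟨?_, ?_⟩, le_max_left _ _, ?_⟩
    · exact (Order.lt_succ β).trans_le (le_max_right _ _)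
    · exact max_lt hγ (hLlim.succ_lt hβ)
    · exact max_lt hγ (hLlim.succ_lt hβ)
  · intro x hx hacc
    obtain ⟨c, hc, _, hcx⟩ := hacc.2 0 hacc.1
    exact ⟨hc.1.trans hcx, hx⟩

private lemma disjoint_family (hreg : κ.IsRegular) (hunc : ℵ₀ < κ) :
    ∃ (B : Type u) (T : B → Set Ordinal.{u}), Order.succ κ ≤ #B ∧
      (∀ b, T b ⊆ cofSet κ ∧ IsStationaryIn (Order.succ κ).ord (T b)) ∧
      ∀ b b', b ≠ b' → Disjoint (T b) (T b') := by
  classical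
  set L := (Order.succ κ).ord with hLdef
  have hklim : Order.IsSuccLimit κ.ord := Cardinal.isSuccLimit_ord hreg.aleph0_le
  have hKmk : #κ.ord.ToType = κ := by rw [Cardinal.mk_toType, Cardinal.card_ord]
  have hWmk : #L.ToType = Order.succ κ := by rw [Cardinal.mk_toType, Cardinal.card_ord]
  haveI hKne : Nonempty κ.ord.ToType :=
    Ordinal.toType_nonempty_iff_ne_zero.mpr hklim.pos.ne'
  have hg : ∀ α : Ordinal.{u}, ∃ g : α.ToType → κ.ord.ToType,
      α < L → Function.Injective g := by
    intro α
    by_cases hα : α < L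
    · have hle : #α.ToType ≤ #κ.ord.ToType := by
        rw [Cardinal.mk_toType, hKmk]
        exact Order.lt_succ_iff.mp (Cardinal.lt_ord.mp hα)
      obtain ⟨f⟩ := (Cardinal.le_def _ _).mp hle
      exact ⟨f, fun _ => f.injective⟩
    · exact ⟨fun _ => Classical.arbitrary _, fun h => absurd h hα⟩
  choose gf hgf using hg
  set A : κ.ord.ToType → Ordinal.{u} → Set Ordinal.{u} := fun ξ β =>
    {α | α ∈ cofSet κ ∧ ∃ h : β < α, gf α ((Ordinal.ToType.mk (o := α)) ⟨β, h⟩) = ξ} with hA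
  have claim1 : ∀ β < L, ∃ ξ, IsStationaryIn L (A ξ β) := by
    intro β hβ
    by_contra hcon
    push_neg at hcon
    have hDs : ∀ ξ, ∃ D, IsClubIn L D ∧ A ξ β ∩ D = ∅ := by
      intro ξ
      have h1 := hcon ξ
      unfold IsStationaryIn at h1
      push_neg at h1
      obtain ⟨D, hD1, hD2⟩ := h1
      exact ⟨D, hD1, hD2⟩
    choose Df hDf hDe using hDs
    have hFam : ∀ o : Option κ.ord.ToType, IsClubIn L (o.elim (Set.Ioo β L) Df) := by
      rintro (_ | ξ)
      · exact Ioo_club hreg hβ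
      · exact hDf ξ
    have hcard : #(Option κ.ord.ToType) ≤ κ := by
      rw [Cardinal.mk_option, hKmk, Cardinal.add_one_eq hreg.aleph0_le]
    have hclub := club_iInter hreg hunc hcard hFam
    obtain ⟨α, hαcof, hαD⟩ := cofSet_stationary hreg hunc _ hclub
    have hIoo : α ∈ Set.Ioo β L := Set.mem_iInter.mp hαD none
    set ξ' := gf α ((Ordinal.ToType.mk (o := α)) ⟨β, hIoo.1⟩) with hξ'
    have hmem : α ∈ A ξ' β ∩ Df ξ' :=
      ⟨⟨hαcof, hIoo.1, rfl⟩, Set.mem_iInter.mp hαD (some ξ')⟩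
    rw [hDe ξ'] at hmem
    exact hmem
  set ordOf : L.ToType → Ordinal.{u} := fun w => ((Ordinal.ToType.mk (o := L)).symm w).1
    with hordOf
  have hordlt : ∀ w, ordOf w < L := fun w => ((Ordinal.ToType.mk (o := L)).symm w).2
  have hordinj : Function.Injective ordOf := fun w w' h =>
    (Ordinal.ToType.mk (o := L)).symm.injective (Subtype.ext h)
  have hsel : ∀ w, ∃ ξ, IsStationaryIn L (A ξ (ordOf w)) := fun w => claim1 _ (hordlt w)
  choose ξsel hξsel using hsel
  have hfib : ∃ ξ₀, Order.succ κ ≤ #(ξsel ⁻¹' {ξ₀}) := by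
    by_contra hcon
    push_neg at hcon
    have hle : ∀ ξ, #(ξsel ⁻¹' {ξ}) ≤ κ := fun ξ => Order.lt_succ_iff.mp (hcon ξ)
    have hWle : #L.ToType ≤ κ := by
      calc #L.ToType = #(Σ ξ, ξsel ⁻¹' {ξ}) :=
            (Cardinal.mk_congr (Equiv.sigmaFiberEquiv ξsel)).symm
        _ = Cardinal.sum fun ξ => #(ξsel ⁻¹' {ξ}) := Cardinal.mk_sigma _
        _ ≤ Cardinal.sum fun _ : κ.ord.ToType => κ := Cardinal.sum_le_sum _ _ hle
        _ = #κ.ord.ToType * κ := Cardinal.sum_const' _ κ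
        _ = κ := by rw [hKmk]; exact Cardinal.mul_eq_left hreg.aleph0_le le_rfl hreg.pos.ne'
    rw [hWmk] at hWle
    exact absurd hWle (Order.lt_succ κ).not_ge
  obtain ⟨ξ₀, hξ₀⟩ := hfib
  refine ⟨ξsel ⁻¹' {ξ₀}, fun b => A ξ₀ (ordOf b.1), hξ₀, ?_, ?_⟩
  · intro b
    refine ⟨fun x hx => hx.1, ?_⟩
    have hb : ξsel b.1 = ξ₀ := b.2
    have hst := hξsel b.1
    rwa [hb] at hst
  · rintro b b' hne
    rw [Set.disjoint_left]
    rintro α ⟨hc, h1, he1⟩ ⟨-, h2, he2⟩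
    have hinj := hgf α hc.1
    have heq : (⟨ordOf b.1, h1⟩ : Set.Iio α) = ⟨ordOf b'.1, h2⟩ :=
      (Ordinal.ToType.mk (o := α)).injective (hinj (he1.trans he2.symm))
    have hoo : ordOf b.1 = ordOf b'.1 := Subtype.mk_eq_mk.mp heq
    exact hne (Subtype.ext (hordinj hoo))

end StationaryHelpers


/-- There is a family of `2^(κ⁺)` many stationary subsets of `κ⁺ ∩ cof(κ)`
such that the difference of any two distinct members is stationary. -/
theorem stmt17 (κ : Cardinal.{u}) (hreg : κ.IsRegular) (hunc : ℵ₀ < κ) :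
    ∃ Sf : ((2 : Cardinal.{u}) ^ Order.succ κ).ord.ToType → Set Ordinal.{u},
      (∀ i, Sf i ⊆ cofSet κ ∧ IsStationaryIn (Order.succ κ).ord (Sf i)) ∧
      ∀ i j, i ≠ j → IsStationaryIn (Order.succ κ).ord (Sf i \ Sf j) := by
  classical
  obtain ⟨B, T, hBcard, hT, hdisj⟩ := disjoint_family hreg hunc
  have hBinf : ℵ₀ ≤ #B := (hreg.aleph0_le.trans (Order.le_succ κ)).trans hBcard
  have hBne : Nonempty B := Cardinal.mk_ne_zero_iff.mp
    (Cardinal.aleph0_pos.trans_le hBinf).ne'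
  have h2B : (2 : Cardinal.{u}) ≤ #B := by
    refine le_trans ?_ hBinf
    exact_mod_cast (Cardinal.nat_lt_aleph0 2).le
  have he1 : #(B × Bool) ≤ #B := by
    simp only [Cardinal.mk_prod, Cardinal.mk_bool, Cardinal.lift_uzero, Cardinal.lift_ofNat]
    exact le_of_eq (Cardinal.mul_eq_left hBinf h2B two_ne_zero)
  obtain ⟨e1⟩ := (Cardinal.le_def _ _).mp he1
  have he2 : #(((2 : Cardinal.{u}) ^ Order.succ κ).ord.ToType) ≤ #(B → Bool) := by
    rw [Cardinal.mk_toType, Cardinal.card_ord]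
    simp only [Cardinal.mk_arrow, Cardinal.mk_bool, Cardinal.lift_uzero, Cardinal.lift_ofNat]
    exact Cardinal.power_le_power_left two_ne_zero hBcard
  obtain ⟨e2⟩ := (Cardinal.le_def _ _).mp he2
  refine ⟨fun i => ⋃ b : B, T (e1 (b, e2 i b)), ?_, ?_⟩
  · intro i
    constructor
    · exact Set.iUnion_subset fun b => (hT _).1
    · obtain ⟨b₀⟩ := hBne
      exact stat_of_subset (Set.subset_iUnion (fun b => T (e1 (b, e2 i b))) b₀) (hT _).2
  · intro i j hij
    have hne2 : e2 i ≠ e2 j := fun h => hij (e2.injective h)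
    obtain ⟨b, hb⟩ : ∃ b, e2 i b ≠ e2 j b := by
      by_contra h
      push_neg at h
      exact hne2 (funext h)
    refine stat_of_subset ?_ (hT (e1 (b, e2 i b))).2
    intro x hx
    refine ⟨Set.mem_iUnion.mpr ⟨b, hx⟩, ?_⟩
    intro hxj
    obtain ⟨b', hx'⟩ := Set.mem_iUnion.mp hxj
    have hne : e1 (b, e2 i b) ≠ e1 (b', e2 j b') := by
      intro h
      have h' := e1.injective h
      rw [Prod.ext_iff] at h'
      obtain ⟨h1, h2⟩ := h'
      dsimp at h1 h2
      subst h1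
      exact hb h2
    have hd := hdisj _ _ hne
    rw [Set.disjoint_left] at hd
    exact hd hx hx'

end FarTrees
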